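/- Let γ be a generalised limit on L_∞(0,∞) and let A ∈ M_{1,∞}^+. Then the map s ↦ s^{−1}·ζ_{γ∘σ_s}(A) = γ(t ↦ (1/t)Tr(A^{1+s/t})) is a convex (and hence continuous) function of s on (0,∞). -/

import Mathlib

open Filter MeasureTheory Set
open scoped ENNReal NNReal

noncomputable section

variable {H : Type*} [NormedAddCommGroup H] [InnerProductSpace ℂ H] [CompleteSpace H]

/-- The `n`-th approximation number of `T` (equal to the `(n+1)`-th singular value
`μ(n+1, T)` for a compact operator `T` on a Hilbert space): the distance from `T`
to the set of operators of rank at most `n`. -/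
noncomputable def mu (T : H →L[ℂ] H) (n : ℕ) : ℝ :=
  sInf ((fun F : H →L[ℂ] H => ‖T - F‖) ''
    {F : H →L[ℂ] H | ∃ _ : FiniteDimensional ℂ (LinearMap.range (F : H →ₗ[ℂ] H)),
        Module.finrank ℂ (LinearMap.range (F : H →ₗ[ℂ] H)) ≤ n})

/-- The singular value step function `μ(·, T)` on `(0, ∞)`, equal to `μ(n, T)` on `[n-1, n)`. -/
noncomputable def muFun (T : H →L[ℂ] H) (t : ℝ) : ℝ := mu T ⌊t⌋₊

/-- Membership in the Dixmier ideal `M_{1,∞}`: `T` is compact and the partial sums of the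
singular values grow at most logarithmically. -/
def MemM1 (T : H →L[ℂ] H) : Prop :=
  IsCompactOperator (⇑T) ∧
    ∃ C : ℝ, ∀ n : ℕ, ∑ k ∈ Finset.range (n + 1), mu T k ≤ C * Real.log (n + 2)

/-- The norm `‖T‖_{1,∞} = sup_{n ≥ 1} (1/log(1+n)) ∑_{k=1}^n μ(k,T)`. -/
noncomputable def norm1Inf (T : H →L[ℂ] H) : ℝ :=
  ⨆ n : ℕ, (Real.log (n + 2))⁻¹ * ∑ k ∈ Finset.range (n + 1), mu T k

/-- Hardy–Littlewood majorization `B ≺≺ A`. -/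
def Majorized (B A : H →L[ℂ] H) : Prop :=
  ∀ t : ℝ, 0 ≤ t → ∫ s in (0:ℝ)..t, muFun B s ≤ ∫ s in (0:ℝ)..t, muFun A s

/-- `T` is trace class iff its singular values are summable. -/
def TraceClass (T : H →L[ℂ] H) : Prop := Summable (mu T)

/-- The trace of `T` computed along the Hilbert basis `b` (complex-valued;
junk value when the sum does not converge). -/
noncomputable def trC {ι : Type*} (b : HilbertBasis ι ℂ H) (T : H →L[ℂ] H) : ℂ :=
  ∑' i, (inner ℂ (b i) (T (b i)) : ℂ)

/-- The (real part of the) trace of `T` along the Hilbert basis `b`. -/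
noncomputable def trR {ι : Type*} (b : HilbertBasis ι ℂ H) (T : H →L[ℂ] H) : ℝ :=
  (trC b T).re

/-- A generalised limit: a positive normalised linear functional on `L_∞(0,∞)`
(modelled as the space of bounded functions on `ℝ`) vanishing on functions that
tend to `0` at `+∞`. -/
structure GeneralisedLimit : Type where
  toFun : lp (fun _ : ℝ => ℝ) ∞ →ₗ[ℝ] ℝ
  pos' : ∀ f : lp (fun _ : ℝ => ℝ) ∞, (∀ t, 0 ≤ f t) → 0 ≤ toFun f
  normalized' : ∀ f : lp (fun _ : ℝ => ℝ) ∞, (∀ t, f t = 1) → toFun f = 1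
  vanishing' : ∀ f : lp (fun _ : ℝ => ℝ) ∞,
    Tendsto (fun t => f t) atTop (nhds (0:ℝ)) → toFun f = 0

open scoped Classical in
/-- Application of a generalised limit to an arbitrary function
(junk value `0` if the function is not bounded). -/
noncomputable def glim (γ : GeneralisedLimit) (f : ℝ → ℝ) : ℝ :=
  if h : Memℓp f ∞ then γ.toFun ⟨f, h⟩ else 0

/-- Application of a generalised limit to a complex-valued function. -/
noncomputable def glimC (γ : GeneralisedLimit) (f : ℝ → ℂ) : ℂ :=
  ⟨glim γ fun t => (f t).re, glim γ fun t => (f t).im⟩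

/-- Dilation invariance of a generalised limit: invariance under all `σ_s`, `s>0`,
where `(σ_s x)(t) = x(t/s)`. -/
def DilationInvariant (γ : GeneralisedLimit) : Prop :=
  ∀ s : ℝ, 0 < s → ∀ f : ℝ → ℝ, glim γ (fun t => f (t / s)) = glim γ f

/-- The Cesàro operator `(Mx)(t) = (1/log t) ∫_1^t x(s) ds/s`. -/
noncomputable def cesaro (x : ℝ → ℝ) : ℝ → ℝ :=
  fun t => (Real.log t)⁻¹ * ∫ s in (1:ℝ)..t, x s / s

/-- The Cesàro operator on complex-valued functions. -/
noncomputable def cesaroC (x : ℝ → ℂ) : ℝ → ℂ :=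
  fun t => ((Real.log t)⁻¹ : ℂ) * ∫ s in (1:ℝ)..t, x s / (s:ℂ)

/-- The real part `Re(A) = (A + A^*)/2`. -/
noncomputable def reOp (A : H →L[ℂ] H) : H →L[ℂ] H :=
  (2 : ℂ)⁻¹ • (A + ContinuousLinearMap.adjoint A)

/-- The imaginary part `Im(A) = (A - A^*)/(2i)`. -/
noncomputable def imOp (A : H →L[ℂ] H) : H →L[ℂ] H :=
  (2 * Complex.I)⁻¹ • (A - ContinuousLinearMap.adjoint A)

/-- The positive part of a self-adjoint operator, via the functional calculus. -/
noncomputable def posPartOp (A : H →L[ℂ] H) : H →L[ℂ] H := cfc (fun x : ℝ => max x 0) A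

/-- The negative part of a self-adjoint operator, via the functional calculus. -/
noncomputable def negPartOp (A : H →L[ℂ] H) : H →L[ℂ] H := cfc (fun x : ℝ => max (-x) 0) A

/-- The square root `B^{1/2}` of a positive operator. -/
noncomputable def sqrtOp (A : H →L[ℂ] H) : H →L[ℂ] H := cfc Real.sqrt A

/-- Extension of a functional from the positive cone to all operators via the
Jordan decomposition `A = (Re(A)_+ - Re(A)_-) + i(Im(A)_+ - Im(A)_-)`. -/
noncomputable def jordanExt (φ : (H →L[ℂ] H) → ℂ) (A : H →L[ℂ] H) : ℂ :=
  (φ (posPartOp (reOp A)) - φ (negPartOp (reOp A))) +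
    Complex.I * (φ (posPartOp (imOp A)) - φ (negPartOp (imOp A)))

/-- The function `t ↦ (1/t) Tr(A^{1+1/t})` (for `t > 0`, extended by `0`). -/
noncomputable def zetaFn {ι : Type*} (b : HilbertBasis ι ℂ H) (A : H →L[ℂ] H) : ℝ → ℝ :=
  fun t => if 0 < t then t⁻¹ * trR b (cfc (fun x : ℝ => x ^ (1 + t⁻¹)) A) else 0

/-- The function `t ↦ (1/t) Tr(A^{1+1/t} B)` (for `t > 0`, extended by `0`). -/
noncomputable def zetaFnB {ι : Type*} (b : HilbertBasis ι ℂ H) (A B : H →L[ℂ] H) : ℝ → ℂ :=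
  fun t => if 0 < t then (t : ℂ)⁻¹ * trC b ((cfc (fun x : ℝ => x ^ (1 + t⁻¹)) A) * B) else 0

/-- The zeta functional `ζ_γ(A) = γ(t ↦ (1/t) Tr(A^{1+1/t}))` for positive `A`. -/
noncomputable def zeta {ι : Type*} (γ : GeneralisedLimit) (b : HilbertBasis ι ℂ H)
    (A : H →L[ℂ] H) : ℝ :=
  glim γ (zetaFn b A)

/-- `ζ_γ` extended to all of `M_{1,∞}` via the Jordan decomposition. -/
noncomputable def zetaAll {ι : Type*} (γ : GeneralisedLimit) (b : HilbertBasis ι ℂ H)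
    (A : H →L[ℂ] H) : ℂ :=
  jordanExt (fun P => (zeta γ b P : ℂ)) A

/-- The functional `ζ_{γ,B}(A) = γ(t ↦ (1/t) Tr(A^{1+1/t} B))` for positive `A`. -/
noncomputable def zetaB {ι : Type*} (γ : GeneralisedLimit) (b : HilbertBasis ι ℂ H)
    (A B : H →L[ℂ] H) : ℂ :=
  glimC γ (zetaFnB b A B)

/-- `ζ_{γ,B}` extended to all of `M_{1,∞}` (in the variable `A`) via the Jordan
decomposition. -/
noncomputable def zetaBAll {ι : Type*} (γ : GeneralisedLimit) (b : HilbertBasis ι ℂ H)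
    (A B : H →L[ℂ] H) : ℂ :=
  jordanExt (fun P => zetaB γ b P B) A

/-- The heat kernel function `t ↦ (1/t) Tr(exp(-(tA)^{-q}))` (for `t > 0`, extended by `0`),
where `exp(-(tu)^{-q})` is interpreted as `0` at `u = 0`. -/
noncomputable def hkFn {ι : Type*} (q : ℝ) (b : HilbertBasis ι ℂ H) (A : H →L[ℂ] H) : ℝ → ℝ :=
  fun t => if 0 < t then
    t⁻¹ * trR b (cfc (fun u : ℝ => if u ≤ 0 then 0 else Real.exp (-((t * u) ^ (-q)))) A)
  else 0

/-- The heat kernel functional `ξ_ω(A) = (ω ∘ M)(t ↦ (1/t) Tr(exp(-(tA)^{-q})))`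
for positive `A`. -/
noncomputable def xi {ι : Type*} (ω : GeneralisedLimit) (q : ℝ) (b : HilbertBasis ι ℂ H)
    (A : H →L[ℂ] H) : ℝ :=
  glim ω (cesaro (hkFn q b A))

/-- `ξ_ω` extended to all of `M_{1,∞}` via the Jordan decomposition. -/
noncomputable def xiAll {ι : Type*} (ω : GeneralisedLimit) (q : ℝ) (b : HilbertBasis ι ℂ H)
    (A : H →L[ℂ] H) : ℂ :=
  jordanExt (fun P => (xi ω q b P : ℂ)) A

/-- The Dixmier trace `τ_ω(A) = ω(t ↦ (1/log(1+t)) ∫_0^t μ(s,A) ds)` for positive `A`. -/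
noncomputable def dix (ω : GeneralisedLimit) (A : H →L[ℂ] H) : ℝ :=
  glim ω (fun t => if 0 < t then (Real.log (1 + t))⁻¹ * ∫ s in (0:ℝ)..t, muFun A s else 0)

/-- The Dixmier trace extended to all of `M_{1,∞}` via the Jordan decomposition. -/
noncomputable def dixAll (ω : GeneralisedLimit) (A : H →L[ℂ] H) : ℂ :=
  jordanExt (fun P => (dix ω P : ℂ)) A

/-- The generalised limit `ω ∘ log`, `(ω ∘ log)(z) = ω(t ↦ z(log t))`. -/
noncomputable def glimLog (ω : GeneralisedLimit) (f : ℝ → ℝ) : ℝ :=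
  glim ω (fun t => if 1 < t then f (Real.log t) else 0)

/-- `ω ∘ log` applied to a complex-valued function. -/
noncomputable def glimLogC (ω : GeneralisedLimit) (f : ℝ → ℂ) : ℂ :=
  ⟨glimLog ω fun t => (f t).re, glimLog ω fun t => (f t).im⟩

/-- Dilation invariance of the generalised limit `ω ∘ log`. -/
def LogDilationInvariant (ω : GeneralisedLimit) : Prop :=
  ∀ s : ℝ, 0 < s → ∀ f : ℝ → ℝ, glimLog ω (fun t => f (t / s)) = glimLog ω f

/-- The (nonlinear) operator `T`: `(TA)(t) = (1/log(1+t)) Tr((A - 1/t) e^A(1/t, ∞))`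
(for `t > 0`, extended by `0`). -/
noncomputable def Tfun {ι : Type*} (b : HilbertBasis ι ℂ H) (A : H →L[ℂ] H) : ℝ → ℝ :=
  fun t => if 0 < t then
    (Real.log (1 + t))⁻¹ * trR b (cfc (fun x : ℝ => if t⁻¹ < x then x - t⁻¹ else 0) A)
  else 0

/-- A fully symmetric functional on `M_{1,∞}`: linear on `M_{1,∞}`, real-valued on the
positive cone, and monotone with respect to Hardy–Littlewood majorization. -/
structure FullySymmetricFunctional (H : Type*) [NormedAddCommGroup H]
    [InnerProductSpace ℂ H] [CompleteSpace H] : Type _ where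
  toFun : (H →L[ℂ] H) → ℂ
  add' : ∀ A B : H →L[ℂ] H, MemM1 A → MemM1 B → toFun (A + B) = toFun A + toFun B
  smul' : ∀ (c : ℂ) (A : H →L[ℂ] H), MemM1 A → toFun (c • A) = c * toFun A
  real' : ∀ A : H →L[ℂ] H, MemM1 A → A.IsPositive → (toFun A).im = 0
  mono' : ∀ A B : H →L[ℂ] H, MemM1 A → MemM1 B → A.IsPositive → B.IsPositive →
    Majorized B A → (toFun B).re ≤ (toFun A).re

/-- The norm of a fully symmetric functional in the dual space of `M_{1,∞}`. -/
noncomputable def fsNorm {H : Type*} [NormedAddCommGroup H] [InnerProductSpace ℂ H]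
    [CompleteSpace H] (φ : FullySymmetricFunctional H) : ℝ :=
  sSup {r : ℝ | ∃ A : H →L[ℂ] H, MemM1 A ∧ norm1Inf A ≤ 1 ∧ r = ‖φ.toFun A‖}

/-- `ξ_{ω,B,f}(A) = (ω ∘ M)(t ↦ (1/t) Tr(f(tA) B))` for positive `A`. -/
noncomputable def xiBf {ι : Type*} (ω : GeneralisedLimit) (b : HilbertBasis ι ℂ H)
    (f : ℝ → ℝ) (B A : H →L[ℂ] H) : ℂ :=
  ⟨glim ω (cesaro fun t => if 0 < t then
      t⁻¹ * (trC b ((cfc (fun x : ℝ => f (t * x)) A) * B)).re else 0),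
   glim ω (cesaro fun t => if 0 < t then
      t⁻¹ * (trC b ((cfc (fun x : ℝ => f (t * x)) A) * B)).im else 0)⟩

/-- `ξ_{ω,B,f}` extended to all of `M_{1,∞}` (in the variable `A`) via the Jordan
decomposition. -/
noncomputable def xiBfAll {ι : Type*} (ω : GeneralisedLimit) (b : HilbertBasis ι ℂ H)
    (f : ℝ → ℝ) (B A : H →L[ℂ] H) : ℂ :=
  jordanExt (fun P => xiBf ω b f B P) A

open scoped InnerProductSpace ComplexConjugate

lemma aux_inner_real {T : H →L[ℂ] H} (hT : IsSelfAdjoint T) (x : H) :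
    (inner ℂ x (T x) : ℂ) = (((inner ℂ x (T x) : ℂ)).re : ℂ) := by
  have h1 : conj (inner ℂ x (T x) : ℂ) = (inner ℂ x (T x) : ℂ) := by
    calc conj (inner ℂ x (T x) : ℂ) = (inner ℂ (T x) x : ℂ) := by rw [inner_conj_symm]
    _ = (inner ℂ (ContinuousLinearMap.adjoint T x) x : ℂ) := by rw [hT.adjoint_eq]
    _ = (inner ℂ x (T x) : ℂ) := ContinuousLinearMap.adjoint_inner_left T x x
  exact (Complex.conj_eq_iff_re.mp h1).symm

lemma aux_trR {ι : Type*} (b : HilbertBasis ι ℂ H) {T : H →L[ℂ] H} (hT : IsSelfAdjoint T) :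
    trR b T = ∑' i, (inner ℂ (b i) (T (b i)) : ℂ).re := by
  have h1 : trC b T = ((∑' i, (inner ℂ (b i) (T (b i)) : ℂ).re : ℝ) : ℂ) := by
    rw [trC, tsum_congr (fun i => aux_inner_real hT (b i)), ← Complex.ofReal_tsum]
  rw [trR, h1, Complex.ofReal_re]

lemma aux_quad_nonneg {T : H →L[ℂ] H} (hT : 0 ≤ T) (x : H) : 0 ≤ (inner ℂ x (T x) : ℂ).re := by
  have := ((ContinuousLinearMap.nonneg_iff_isPositive T).mp hT).inner_nonneg_right x
  exact (Complex.le_def.mp this).1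

lemma aux_quad_mono {A : H →L[ℂ] H} {f g : ℝ → ℝ}
    (hle : ∀ x ∈ spectrum ℝ A, f x ≤ g x)
    (hf : ContinuousOn f (spectrum ℝ A)) (hg : ContinuousOn g (spectrum ℝ A)) (x : H) :
    (inner ℂ x ((cfc f A) x) : ℂ).re ≤ (inner ℂ x ((cfc g A) x) : ℂ).re := by
  have hmono : cfc f A ≤ cfc g A := cfc_mono hle hf hg
  have h0 : 0 ≤ (inner ℂ x ((cfc g A - cfc f A) x) : ℂ).re :=
    aux_quad_nonneg (sub_nonneg.mpr hmono) x
  rw [ContinuousLinearMap.sub_apply, inner_sub_right, Complex.sub_re] at h0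
  linarith


lemma aux_cont {S : Set ℝ} (hS : ∀ x ∈ S, 0 ≤ x) {p : ℝ} (hp : 0 ≤ p) :
    ContinuousOn (fun x : ℝ => x ^ p) S := fun x _ =>
  (Real.continuousAt_rpow_const x p (Or.inr hp)).continuousWithinAt

lemma aux_rpow_convex {x : ℝ} (hx : 0 ≤ x) {e1 e2 a c : ℝ} (he1 : 0 < e1) (he2 : 0 < e2)
    (ha : 0 ≤ a) (hc : 0 ≤ c) (hac : a + c = 1) :
    x ^ (1 + (a * e1 + c * e2)) ≤ a * x ^ (1 + e1) + c * x ^ (1 + e2) := by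
  rcases hx.eq_or_lt with h | h
  · rw [← h, Real.zero_rpow (by positivity), Real.zero_rpow (by positivity),
      Real.zero_rpow (by positivity)]
    simp
  · rw [Real.rpow_def_of_pos h, Real.rpow_def_of_pos h, Real.rpow_def_of_pos h]
    have key := convexOn_exp.2 (Set.mem_univ (Real.log x * (1 + e1)))
      (Set.mem_univ (Real.log x * (1 + e2))) ha hc hac
    simp only [smul_eq_mul] at key
    have hexp : 1 + (a * e1 + c * e2) = a * (1 + e1) + c * (1 + e2) := by
      linear_combination -hac
    have harg : Real.log x * (1 + (a * e1 + c * e2)) =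
        a * (Real.log x * (1 + e1)) + c * (Real.log x * (1 + e2)) := by
      rw [hexp]; ring
    rw [harg]
    exact key

lemma aux_rpow_compare {x M e1 e2 : ℝ} (hx : 0 ≤ x) (hxM : x ≤ M) (he1 : 0 < e1)
    (h12 : e1 ≤ e2) : x ^ (1 + e2) ≤ M ^ (e2 - e1) * x ^ (1 + e1) := by
  rcases hx.eq_or_lt with h | h
  · rw [← h, Real.zero_rpow (by linarith : (0:ℝ) < 1 + e2).ne',
      Real.zero_rpow (by linarith : (0:ℝ) < 1 + e1).ne', mul_zero]
  · have hsplit : x ^ (1 + e2) = x ^ (1 + e1) * x ^ (e2 - e1) := by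
      rw [← Real.rpow_add h]; ring_nf
    rw [hsplit, mul_comm]
    have : x ^ (e2 - e1) ≤ M ^ (e2 - e1) := Real.rpow_le_rpow hx hxM (by linarith)
    have hx1 : 0 ≤ x ^ (1 + e1) := Real.rpow_nonneg hx _
    exact mul_le_mul_of_nonneg_right this hx1

lemma aux_glim_zero (γ : GeneralisedLimit) : glim γ (fun _ => (0 : ℝ)) = 0 := by
  classical
  have hm : Memℓp (fun _ : ℝ => (0 : ℝ)) ∞ := zero_memℓp
  rw [glim, dif_pos hm]
  have h0 : (⟨fun _ => (0 : ℝ), hm⟩ : lp (fun _ : ℝ => ℝ) ∞) = 0 := Subtype.ext rfl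
  rw [h0, map_zero]

lemma aux_glim_vanish (γ : GeneralisedLimit) {f : ℝ → ℝ} (hm : Memℓp f ∞)
    (hf : Tendsto f atTop (nhds (0 : ℝ))) : glim γ f = 0 := by
  classical
  rw [glim, dif_pos hm]
  exact γ.vanishing' ⟨f, hm⟩ hf

lemma aux_zero_case {F : ℝ → ℝ} (hF : ∀ s ∈ Set.Ioi (0 : ℝ), F s = 0) :
    ConvexOn ℝ (Set.Ioi (0 : ℝ)) F ∧ ContinuousOn F (Set.Ioi (0 : ℝ)) := by
  constructor
  · refine ⟨convex_Ioi 0, fun x hx y hy a c ha hc hac => ?_⟩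
    have hxy := (convex_Ioi (0 : ℝ)) hx hy ha hc hac
    rw [hF _ hxy, hF x hx, hF y hy]
    simp
  · exact continuousOn_const.congr hF

lemma aux_glim_convexOn (γ : GeneralisedLimit) (F : ℝ → ℝ → ℝ)
    (hmem : ∀ s ∈ Set.Ioi (0 : ℝ), Memℓp (F s) ∞)
    (hpt : ∀ s₁ ∈ Set.Ioi (0 : ℝ), ∀ s₂ ∈ Set.Ioi (0 : ℝ), ∀ a c : ℝ, 0 ≤ a → 0 ≤ c →
      a + c = 1 → ∀ t, F (a * s₁ + c * s₂) t ≤ a * F s₁ t + c * F s₂ t) :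
    ConvexOn ℝ (Set.Ioi (0 : ℝ)) (fun s => glim γ (F s)) := by
  classical
  refine ⟨convex_Ioi 0, fun x hx y hy a c ha hc hac => ?_⟩
  simp only [smul_eq_mul]
  have hxy : a * x + c * y ∈ Set.Ioi (0 : ℝ) := by
    simpa only [smul_eq_mul] using (convex_Ioi (0 : ℝ)) hx hy ha hc hac
  set F1 : lp (fun _ : ℝ => ℝ) ∞ := ⟨F x, hmem x hx⟩ with hF1
  set F2 : lp (fun _ : ℝ => ℝ) ∞ := ⟨F y, hmem y hy⟩ with hF2
  set Fm : lp (fun _ : ℝ => ℝ) ∞ := ⟨F (a * x + c * y), hmem _ hxy⟩ with hFm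
  have hpos : 0 ≤ γ.toFun (a • F1 + c • F2 - Fm) := by
    apply γ.pos'
    intro t
    have hcoe : (a • F1 + c • F2 - Fm) t = a * F x t + c * F y t - F (a * x + c * y) t := by
      rw [congrFun (lp.coeFn_sub (a • F1 + c • F2) Fm) t]
      rw [Pi.sub_apply, congrFun (lp.coeFn_add (a • F1) (c • F2)) t, Pi.add_apply,
        congrFun (lp.coeFn_smul a F1) t, congrFun (lp.coeFn_smul c F2) t]
      rfl
    rw [hcoe]
    have := hpt x hx y hy a c ha hc hac t
    linarith
  have hlin : γ.toFun (a • F1 + c • F2 - Fm) =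
      a * γ.toFun F1 + c * γ.toFun F2 - γ.toFun Fm := by
    rw [map_sub, map_add, γ.toFun.map_smul, γ.toFun.map_smul, smul_eq_mul, smul_eq_mul]
  rw [hlin] at hpos
  have hg1 : glim γ (F x) = γ.toFun F1 := by rw [glim, dif_pos (hmem x hx)]
  have hg2 : glim γ (F y) = γ.toFun F2 := by rw [glim, dif_pos (hmem y hy)]
  have hgm : glim γ (F (a * x + c * y)) = γ.toFun Fm := by rw [glim, dif_pos (hmem _ hxy)]
  rw [hg1, hg2, hgm]
  linarith


lemma aux_re_inner_smul (r : ℝ) (T : H →L[ℂ] H) (x : H) :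
    (inner ℂ x ((r • T) x) : ℂ).re = r * (inner ℂ x (T x) : ℂ).re := by
  rw [ContinuousLinearMap.smul_apply, RCLike.real_smul_eq_coe_smul (K := ℂ),
    inner_smul_right]
  simp

lemma aux_cfc_rpow_nonneg {A : H →L[ℂ] H} (hA0 : 0 ≤ A) (e : ℝ) :
    0 ≤ cfc (fun u : ℝ => u ^ (1 + e)) A :=
  cfc_nonneg (fun u hu => Real.rpow_nonneg (spectrum_nonneg_of_nonneg hA0 hu) _)

lemma aux_term_convex {A : H →L[ℂ] H} (hA0 : 0 ≤ A) {e1 e2 a c : ℝ}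
    (he1 : 0 < e1) (he2 : 0 < e2) (ha : 0 ≤ a) (hc : 0 ≤ c) (hac : a + c = 1) (x : H) :
    (inner ℂ x (cfc (fun u : ℝ => u ^ (1 + (a * e1 + c * e2))) A x) : ℂ).re ≤
      a * (inner ℂ x (cfc (fun u : ℝ => u ^ (1 + e1)) A x) : ℂ).re +
        c * (inner ℂ x (cfc (fun u : ℝ => u ^ (1 + e2)) A x) : ℂ).re := by
  have hspec : ∀ u ∈ spectrum ℝ A, 0 ≤ u := fun u hu => spectrum_nonneg_of_nonneg hA0 hu
  have h1 : ContinuousOn (fun u : ℝ => u ^ (1 + e1)) (spectrum ℝ A) :=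
    aux_cont hspec (by linarith)
  have h2 : ContinuousOn (fun u : ℝ => u ^ (1 + e2)) (spectrum ℝ A) :=
    aux_cont hspec (by linarith)
  have hmexp : (0:ℝ) ≤ 1 + (a * e1 + c * e2) := by positivity
  have hm : ContinuousOn (fun u : ℝ => u ^ (1 + (a * e1 + c * e2))) (spectrum ℝ A) :=
    aux_cont hspec hmexp
  have step1 := aux_quad_mono
    (f := fun u : ℝ => u ^ (1 + (a * e1 + c * e2)))
    (g := fun u : ℝ => a * u ^ (1 + e1) + c * u ^ (1 + e2))
    (fun u hu => aux_rpow_convex (hspec u hu) he1 he2 ha hc hac)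
    hm ((continuousOn_const.mul h1).add (continuousOn_const.mul h2)) x
  have hcombo : cfc (fun u : ℝ => a * u ^ (1 + e1) + c * u ^ (1 + e2)) A =
      a • cfc (fun u : ℝ => u ^ (1 + e1)) A + c • cfc (fun u : ℝ => u ^ (1 + e2)) A := by
    rw [cfc_add A (fun u => a * u ^ (1 + e1)) (fun u => c * u ^ (1 + e2))
      (continuousOn_const.mul h1) (continuousOn_const.mul h2),
      cfc_const_mul a _ A h1, cfc_const_mul c _ A h2]
  rw [hcombo, ContinuousLinearMap.add_apply, inner_add_right, Complex.add_re,
    aux_re_inner_smul, aux_re_inner_smul] at step1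
  exact step1

lemma aux_summable_mono [Nontrivial H] {ι : Type*} (b : HilbertBasis ι ℂ H)
    {A : H →L[ℂ] H} (hA0 : 0 ≤ A) {e1 e2 : ℝ} (he1 : 0 < e1) (h12 : e1 ≤ e2)
    (hs : Summable fun i => (inner ℂ (b i) (cfc (fun u : ℝ => u ^ (1 + e1)) A (b i)) : ℂ).re) :
    Summable fun i => (inner ℂ (b i) (cfc (fun u : ℝ => u ^ (1 + e2)) A (b i)) : ℂ).re := by
  set M := max ‖A‖ 1 with hMdef
  have hspec0 : ∀ u ∈ spectrum ℝ A, 0 ≤ u := fun u hu => spectrum_nonneg_of_nonneg hA0 hu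
  have hspecM : ∀ u ∈ spectrum ℝ A, u ≤ M := by
    intro u hu
    refine le_trans (le_trans (le_abs_self u) ?_) (le_max_left _ _)
    simpa [Real.norm_eq_abs] using spectrum.norm_le_norm_of_mem hu
  have h1 : ContinuousOn (fun u : ℝ => u ^ (1 + e1)) (spectrum ℝ A) :=
    aux_cont hspec0 (by linarith)
  have h2 : ContinuousOn (fun u : ℝ => u ^ (1 + e2)) (spectrum ℝ A) :=
    aux_cont hspec0 (by linarith)
  refine Summable.of_nonneg_of_le
    (fun i => aux_quad_nonneg (aux_cfc_rpow_nonneg hA0 e2) _)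
    (fun i => ?_) (hs.mul_left (M ^ (e2 - e1)))
  have step := aux_quad_mono
    (f := fun u : ℝ => u ^ (1 + e2))
    (g := fun u : ℝ => M ^ (e2 - e1) * u ^ (1 + e1))
    (fun u hu => aux_rpow_compare (hspec0 u hu) (hspecM u hu) he1 h12)
    h2 (continuousOn_const.mul h1) (b i)
  rwa [cfc_const_mul _ _ A h1, aux_re_inner_smul] at step

lemma aux_h_convex {ι : Type*} (b : HilbertBasis ι ℂ H) {A : H →L[ℂ] H} (hA0 : 0 ≤ A)
    (hsum : ∀ e : ℝ, 0 < e →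
      Summable fun i => (inner ℂ (b i) (cfc (fun u : ℝ => u ^ (1 + e)) A (b i)) : ℂ).re)
    {e1 e2 a c : ℝ} (he1 : 0 < e1) (he2 : 0 < e2) (ha : 0 ≤ a) (hc : 0 ≤ c)
    (hac : a + c = 1) :
    trR b (cfc (fun u : ℝ => u ^ (1 + (a * e1 + c * e2))) A) ≤
      a * trR b (cfc (fun u : ℝ => u ^ (1 + e1)) A) +
        c * trR b (cfc (fun u : ℝ => u ^ (1 + e2)) A) := by
  have hm : 0 < a * e1 + c * e2 := by
    have hmin : 0 < min e1 e2 := lt_min he1 he2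
    have hma : a * min e1 e2 ≤ a * e1 := mul_le_mul_of_nonneg_left (min_le_left _ _) ha
    have hmc : c * min e1 e2 ≤ c * e2 := mul_le_mul_of_nonneg_left (min_le_right _ _) hc
    nlinarith
  rw [aux_trR b (cfc_predicate _ A), aux_trR b (cfc_predicate _ A),
    aux_trR b (cfc_predicate _ A)]
  have hsra : Summable fun i =>
      a * (inner ℂ (b i) (cfc (fun u : ℝ => u ^ (1 + e1)) A (b i)) : ℂ).re :=
    (hsum e1 he1).mul_left a
  have hsrc : Summable fun i =>
      c * (inner ℂ (b i) (cfc (fun u : ℝ => u ^ (1 + e2)) A (b i)) : ℂ).re :=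
    (hsum e2 he2).mul_left c
  calc ∑' i, (inner ℂ (b i) (cfc (fun u : ℝ => u ^ (1 + (a * e1 + c * e2))) A (b i)) : ℂ).re
      ≤ ∑' i, (a * (inner ℂ (b i) (cfc (fun u : ℝ => u ^ (1 + e1)) A (b i)) : ℂ).re +
          c * (inner ℂ (b i) (cfc (fun u : ℝ => u ^ (1 + e2)) A (b i)) : ℂ).re) :=
        Summable.tsum_le_tsum (fun i => aux_term_convex hA0 he1 he2 ha hc hac (b i))
          (hsum _ hm) (hsra.add hsrc)
    _ = a * (∑' i, (inner ℂ (b i) (cfc (fun u : ℝ => u ^ (1 + e1)) A (b i)) : ℂ).re) +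
        c * (∑' i, (inner ℂ (b i) (cfc (fun u : ℝ => u ^ (1 + e2)) A (b i)) : ℂ).re) := by
        rw [Summable.tsum_add hsra hsrc, tsum_mul_left, tsum_mul_left]


lemma aux_transfer {ι : Type*} (b : HilbertBasis ι ℂ H) (A : H →L[ℂ] H) {s s₀ : ℝ}
    (hs : 0 < s) (hs₀ : 0 < s₀)
    (hmem : Memℓp (fun t : ℝ => if 0 < t then
      t⁻¹ * trR b (cfc (fun x : ℝ => x ^ (1 + s / t)) A) else 0) ∞) :
    Memℓp (fun t : ℝ => if 0 < t then
      t⁻¹ * trR b (cfc (fun x : ℝ => x ^ (1 + s₀ / t)) A) else 0) ∞ := by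
  rw [memℓp_infty_iff] at hmem ⊢
  obtain ⟨C, hC⟩ := hmem
  refine ⟨max ((s / s₀) * C) 0, ?_⟩
  rintro y ⟨t, rfl⟩
  simp only
  by_cases ht : 0 < t
  · have ht' : 0 < t * s / s₀ := by positivity
    have hkey : (if 0 < t then t⁻¹ * trR b (cfc (fun x : ℝ => x ^ (1 + s₀ / t)) A) else 0)
        = (s / s₀) * (if 0 < t * s / s₀ then
            (t * s / s₀)⁻¹ * trR b (cfc (fun x : ℝ => x ^ (1 + s / (t * s / s₀))) A)
          else 0) := by
      rw [if_pos ht, if_pos ht']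
      have hexp : s / (t * s / s₀) = s₀ / t := by
        field_simp
      rw [hexp]
      have hco : (s / s₀) * ((t * s / s₀)⁻¹) = t⁻¹ := by
        field_simp
      rw [← mul_assoc, hco]
    rw [hkey, norm_mul]
    have hC' : ‖(if 0 < t * s / s₀ then
        (t * s / s₀)⁻¹ * trR b (cfc (fun x : ℝ => x ^ (1 + s / (t * s / s₀))) A) else 0)‖
        ≤ C := hC ⟨t * s / s₀, rfl⟩
    have hdiv : 0 < s / s₀ := div_pos hs hs₀
    calc ‖s / s₀‖ * ‖_‖ ≤ ‖s / s₀‖ * C := by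
          exact mul_le_mul_of_nonneg_left hC' (norm_nonneg _)
      _ = (s / s₀) * C := by rw [Real.norm_eq_abs, abs_of_pos hdiv]
      _ ≤ max ((s / s₀) * C) 0 := le_max_left _ _
  · rw [if_neg ht, norm_zero]
    exact le_max_right _ _

/-- For a generalised limit `γ` and `A ∈ M_{1,∞}^+`, the map
`s ↦ s⁻¹·ζ_{γ∘σ_s}(A) = γ(t ↦ (1/t)Tr(A^{1+s/t}))` is convex, and hence continuous,
on `(0,∞)`. -/
theorem stmt6 {ι : Type*} (b : HilbertBasis ι ℂ H) (γ : GeneralisedLimit)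
    (A : H →L[ℂ] H) (hA : MemM1 A) (hApos : A.IsPositive) :
    ConvexOn ℝ (Set.Ioi (0 : ℝ)) (fun s : ℝ =>
      glim γ fun t =>
        if 0 < t then t⁻¹ * trR b (cfc (fun x : ℝ => x ^ (1 + s / t)) A) else 0) ∧
    ContinuousOn (fun s : ℝ =>
      glim γ fun t =>
        if 0 < t then t⁻¹ * trR b (cfc (fun x : ℝ => x ^ (1 + s / t)) A) else 0)
      (Set.Ioi (0 : ℝ)) := by
  classical
  have hA0 : 0 ≤ A := (ContinuousLinearMap.nonneg_iff_isPositive A).mpr hApos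
  by_cases hsing : Subsingleton H
  · apply aux_zero_case
    intro s _
    have hz : ∀ T : H →L[ℂ] H, trR b T = 0 := by
      intro T
      have hterm : ∀ i, (inner ℂ (b i) (T (b i)) : ℂ) = 0 := by
        intro i
        have hb0 : (b i : H) = 0 := Subsingleton.elim _ _
        rw [hb0]
        simp
      rw [trR, trC, tsum_congr hterm]
      simp
    have htr : (fun t : ℝ => if 0 < t then
        t⁻¹ * trR b (cfc (fun x : ℝ => x ^ (1 + s / t)) A) else 0) = fun _ => (0 : ℝ) := by
      funext t
      split
      · rw [hz, mul_zero]
      · rfl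
    rw [htr]
    exact aux_glim_zero γ
  · haveI : Nontrivial H := not_subsingleton_iff_nontrivial.mp hsing
    by_cases hball : ∀ s ∈ Set.Ioi (0 : ℝ), Memℓp (fun t : ℝ => if 0 < t then
        t⁻¹ * trR b (cfc (fun x : ℝ => x ^ (1 + s / t)) A) else 0) ∞
    · by_cases hsum : ∀ e : ℝ, 0 < e → Summable fun i =>
          (inner ℂ (b i) (cfc (fun u : ℝ => u ^ (1 + e)) A (b i)) : ℂ).re
      · -- main case: convexity via pointwise convexity
        have hconv : ConvexOn ℝ (Set.Ioi (0 : ℝ)) (fun s => glim γ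
            ((fun s t => if 0 < t then
              t⁻¹ * trR b (cfc (fun x : ℝ => x ^ (1 + s / t)) A) else 0) s)) := by
          apply aux_glim_convexOn γ _ hball
          intro s₁ hs₁ s₂ hs₂ a c ha hc hac t
          by_cases ht : 0 < t
          · simp only [if_pos ht]
            have hdiv : (a * s₁ + c * s₂) / t = a * (s₁ / t) + c * (s₂ / t) := by
              field_simp
            rw [hdiv]
            have key := aux_h_convex b hA0 hsum (div_pos hs₁ ht) (div_pos hs₂ ht) ha hc hac
            have ht0 : (0 : ℝ) ≤ t⁻¹ := by positivity
            calc t⁻¹ * trR b (cfc (fun x : ℝ => x ^ (1 + (a * (s₁ / t) + c * (s₂ / t)))) A)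
                ≤ t⁻¹ * (a * trR b (cfc (fun x : ℝ => x ^ (1 + s₁ / t)) A) +
                    c * trR b (cfc (fun x : ℝ => x ^ (1 + s₂ / t)) A)) :=
                  mul_le_mul_of_nonneg_left key ht0
              _ = a * (t⁻¹ * trR b (cfc (fun x : ℝ => x ^ (1 + s₁ / t)) A)) +
                  c * (t⁻¹ * trR b (cfc (fun x : ℝ => x ^ (1 + s₂ / t)) A)) := by ring
          · simp only [if_neg ht]
            simp
        exact ⟨hconv, hconv.continuousOn isOpen_Ioi⟩
      · -- non-summable case: the function vanishes at infinity, so glim is 0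
        push_neg at hsum
        obtain ⟨e₀, he₀, hne₀⟩ := hsum
        apply aux_zero_case
        intro s hs
        apply aux_glim_vanish γ (hball s hs)
        have hev : (fun t : ℝ => if 0 < t then
            t⁻¹ * trR b (cfc (fun x : ℝ => x ^ (1 + s / t)) A) else 0)
            =ᶠ[atTop] fun _ => (0 : ℝ) := by
          filter_upwards [eventually_ge_atTop (max 1 (s / e₀))] with t ht
          have ht1 : (1 : ℝ) ≤ t := le_trans (le_max_left _ _) ht
          have htpos : (0 : ℝ) < t := lt_of_lt_of_le one_pos ht1
          simp only [if_pos htpos]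
          have hse : 0 < s / t := div_pos hs htpos
          have hle : s / t ≤ e₀ := by
            rw [div_le_iff₀ htpos]
            have h2 : s / e₀ ≤ t := le_trans (le_max_right _ _) ht
            calc s = (s / e₀) * e₀ := by field_simp
              _ ≤ t * e₀ := mul_le_mul_of_nonneg_right h2 he₀.le
              _ = e₀ * t := mul_comm _ _
          have hnotsum : ¬ Summable fun i =>
              (inner ℂ (b i) (cfc (fun u : ℝ => u ^ (1 + s / t)) A (b i)) : ℂ).re :=
            fun hcon => hne₀ (aux_summable_mono b hA0 hse hle hcon)
          rw [aux_trR b (cfc_predicate _ A), tsum_eq_zero_of_not_summable hnotsum, mul_zero]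
        exact (tendsto_congr' hev).mpr tendsto_const_nhds
    · -- some (hence every) function is unbounded: glim is identically 0
      push_neg at hball
      obtain ⟨s₀, hs₀, hn⟩ := hball
      apply aux_zero_case
      intro s hs
      have hnot : ¬ Memℓp (fun t : ℝ => if 0 < t then
          t⁻¹ * trR b (cfc (fun x : ℝ => x ^ (1 + s / t)) A) else 0) ∞ :=
        fun hmem => hn (aux_transfer b A hs hs₀ hmem)
      rw [glim, dif_neg hnot]

end
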